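/- Let U' = b'₁⋯b'_l ∈ B⁺ where b'ᵢ ∈ A₁ ∪ C_{L₁} ∪ C_{L₂} for all 1 ≤ i ≤ l − 1 and b'_l ∈ B. If φ(U') ∈ A(T), then φ(U') ∈ A(T)(l) and ρ(φ(U')) = U'. -/

import Mathlib

/-- A rewriting system: every rule has nonempty left- and right-hand sides. -/
def IsRWS {α : Type*} (R : Set (List α × List α)) : Prop :=
  ∀ r ∈ R, r.1 ≠ [] ∧ r.2 ≠ []

/-- One-step reduction `W₁ →_R W₂`. -/
def Step {α : Type*} (R : Set (List α × List α)) (W₁ W₂ : List α) : Prop :=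
  ∃ Z₁ Z₂ X Y, (X, Y) ∈ R ∧ W₁ = Z₁ ++ X ++ Z₂ ∧ W₂ = Z₁ ++ Y ++ Z₂

/-- `→*_R`: the reflexive-transitive closure of one-step reduction. -/
def Steps {α : Type*} (R : Set (List α × List α)) : List α → List α → Prop :=
  Relation.ReflTransGen (Step R)

/-- Noetherian: no infinite reduction sequence. -/
def Noetherian {α : Type*} (R : Set (List α × List α)) : Prop :=
  ¬ ∃ g : ℕ → List α, ∀ i, Step R (g i) (g (i + 1))

/-- Confluence. -/
def Confluent {α : Type*} (R : Set (List α × List α)) : Prop :=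
  ∀ U V W, Steps R U V → Steps R U W → ∃ X, Steps R V X ∧ Steps R W X

/-- Complete rewriting system: Noetherian and confluent. -/
def CompleteRWS {α : Type*} (R : Set (List α × List α)) : Prop :=
  Noetherian R ∧ Confluent R

/-- `Irr R W`: `W ∈ A⁺` has no factor which is the left-hand side of a rule. -/
def Irr {α : Type*} (R : Set (List α × List α)) (W : List α) : Prop :=
  W ≠ [] ∧ ¬ ∃ Z₁ X Z₂, (∃ Y, (X, Y) ∈ R) ∧ W = Z₁ ++ X ++ Z₂

/-- `Presents R f`: the map sending a nonempty word `u` over `α` to `f u` exhibits the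
semigroup `S` as the semigroup presented by `[α; R]`, i.e. the semigroup `A⁺/↔*_R`:
`f` restricted to nonempty words is a surjective semigroup homomorphism whose kernel
is the congruence `↔*_R` generated by `R` (the value of `f` on the empty word is irrelevant). -/
def Presents {α S : Type*} [Semigroup S] (R : Set (List α × List α)) (f : List α → S) : Prop :=
  (∀ u v : List α, u ≠ [] → v ≠ [] → f (u ++ v) = f u * f v) ∧
  (∀ x : S, ∃ u : List α, u ≠ [] ∧ f u = x) ∧
  (∀ u v : List α, u ≠ [] → v ≠ [] → (f u = f v ↔ Relation.EqvGen (Step R) u v))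

/-- `S` has a finite complete rewriting system. -/
def HasFCRS (S : Type*) [Semigroup S] : Prop :=
  ∃ (α : Type) (R : Set (List α × List α)) (f : List α → S),
    Finite α ∧ R.Finite ∧ IsRWS R ∧ CompleteRWS R ∧ Presents R f

/-! ### The construction of Section 5.
`S` is a semigroup, `T` a large subsemigroup, `[A; R]` a finitely presented semigroup
presentation for `S` with `R` complete satisfying (Q1)–(Q3), where
`S \ T = {[s₁]_R, …, [sₙ]_R}` with the `sᵢ ∈ Irr(R) ∩ A` given by `s : Fin n → α`.
The new alphabet `B = A₁ ∪ C` is modelled inside `α ⊕ List α`: `Sum.inl a` is a letter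
`a ∈ A₁` and `Sum.inr u` is the letter `c_u ∈ C`. -/

namespace Sec5

variable {α S : Type*} [Semigroup S]

/-- `A₁ = {a ∈ A : [a]_R ∈ T}`. -/
def A1 (f : List α → S) (T : Subsemigroup S) : Set α := {a | f [a] ∈ T}

/-- `A(T)(0)`: the words `W ∈ A⁺` with `[W]_R ∈ T` such that every factor `X₁` of `W`
with `[X₁]_R ∈ S \ T` satisfies `‖X₁‖ = 1` and `X₁ ∈ A_S = {s₁, …, sₙ}`. -/
def AT0 {n : ℕ} (f : List α → S) (T : Subsemigroup S) (s : Fin n → α) : Set (List α) :=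
  {W | W ≠ [] ∧ f W ∈ T ∧
    ∀ Z₁ X₁ Z₂ : List α, X₁ ≠ [] → W = Z₁ ++ X₁ ++ Z₂ → f X₁ ∉ T → ∃ i, X₁ = [s i]}

/-- `F₁ = A₁` (as one-letter words). -/
def F1 (f : List α → S) (T : Subsemigroup S) : Set (List α) :=
  {W | ∃ a : α, f [a] ∈ T ∧ W = [a]}

/-- `F₂ = {sb : s ∈ A_S, b ∈ A₁ ∪ A_S, [sb]_R ∈ T}`. -/
def F2 {n : ℕ} (f : List α → S) (T : Subsemigroup S) (s : Fin n → α) : Set (List α) :=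
  {W | ∃ (i : Fin n) (b : α), (f [b] ∈ T ∨ ∃ j, b = s j) ∧ f [s i, b] ∈ T ∧ W = [s i, b]}

/-- `F₃ = {as : a ∈ A₁, s ∈ A_S, [as]_R ∈ T}`. -/
def F3 {n : ℕ} (f : List α → S) (T : Subsemigroup S) (s : Fin n → α) : Set (List α) :=
  {W | ∃ (a : α) (i : Fin n), f [a] ∈ T ∧ f [a, s i] ∈ T ∧ W = [a, s i]}

/-- `F₄ = {sbs' : s, s' ∈ A_S, b ∈ A₁ ∪ A_S, [sb]_R, [bs']_R, [sbs']_R ∈ T}`. -/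
def F4 {n : ℕ} (f : List α → S) (T : Subsemigroup S) (s : Fin n → α) : Set (List α) :=
  {W | ∃ (i : Fin n) (b : α) (j : Fin n), (f [b] ∈ T ∨ ∃ k, b = s k) ∧
    f [s i, b] ∈ T ∧ f [b, s j] ∈ T ∧ f [s i, b, s j] ∈ T ∧ W = [s i, b, s j]}

/-- The sets `A(T)(i)` for `i ≥ 1` (with `A(T)(0)` given by `AT0`; the value at `0`
here is the empty set and is unused): `A(T)(1) = F₁ ∪ F₂ ∪ F₃ ∪ F₄` and
`A(T)(i+1) = (⋃_{a ∈ A₁} (a·A(T)(i) ∩ A(T)(0))) ∪ (⋃_{X ∈ F₂} (X·A(T)(i) ∩ A(T)(0)))`. -/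
def ATn {n : ℕ} (f : List α → S) (T : Subsemigroup S) (s : Fin n → α) : ℕ → Set (List α)
  | 0 => ∅
  | 1 => F1 f T ∪ F2 f T s ∪ F3 f T s ∪ F4 f T s
  | (i + 2) =>
      (⋃ a ∈ A1 f T, ({W | ∃ V ∈ ATn f T s (i + 1), W = a :: V} ∩ AT0 f T s)) ∪
      (⋃ X ∈ F2 f T s, ({W | ∃ V ∈ ATn f T s (i + 1), W = X ++ V} ∩ AT0 f T s))

/-- `A(T) = ⋃_{i ≥ 1} A(T)(i)`. -/
def ATset {n : ℕ} (f : List α → S) (T : Subsemigroup S) (s : Fin n → α) : Set (List α) :=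
  ⋃ i : ℕ, ATn f T s (i + 1)

/-- `A₁` viewed as a set of letters of `B`. -/
def A1' (f : List α → S) (T : Subsemigroup S) : Set (α ⊕ List α) :=
  {x | ∃ a : α, f [a] ∈ T ∧ x = Sum.inl a}

/-- `C_R = {c_{as} : [as]_R ∈ T, a ∈ A₁, s ∈ A_S}`. -/
def CR {n : ℕ} (f : List α → S) (T : Subsemigroup S) (s : Fin n → α) : Set (α ⊕ List α) :=
  {x | ∃ (a : α) (i : Fin n), f [a] ∈ T ∧ f [a, s i] ∈ T ∧ x = Sum.inr [a, s i]}

/-- `C_{L₁} = {c_{sa} : [sa]_R ∈ T, a ∈ A₁, s ∈ A_S}`. -/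
def CL1 {n : ℕ} (f : List α → S) (T : Subsemigroup S) (s : Fin n → α) : Set (α ⊕ List α) :=
  {x | ∃ (i : Fin n) (a : α), f [a] ∈ T ∧ f [s i, a] ∈ T ∧ x = Sum.inr [s i, a]}

/-- `C_{L₂} = {c_{ss'} : [ss']_R ∈ T, s, s' ∈ A_S}`. -/
def CL2 {n : ℕ} (f : List α → S) (T : Subsemigroup S) (s : Fin n → α) : Set (α ⊕ List α) :=
  {x | ∃ i j : Fin n, f [s i, s j] ∈ T ∧ x = Sum.inr [s i, s j]}

/-- `C_{M₁} = {c_{s'as} : [s'as]_R, [s'a]_R, [as]_R ∈ T, a ∈ A₁, s, s' ∈ A_S}`. -/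
def CM1 {n : ℕ} (f : List α → S) (T : Subsemigroup S) (s : Fin n → α) : Set (α ⊕ List α) :=
  {x | ∃ (i : Fin n) (a : α) (j : Fin n), f [a] ∈ T ∧
    f [s i, a, s j] ∈ T ∧ f [s i, a] ∈ T ∧ f [a, s j] ∈ T ∧ x = Sum.inr [s i, a, s j]}

/-- `C_{M₂} = {c_{ss's''} : [ss's'']_R, [ss']_R, [s's'']_R ∈ T, s, s', s'' ∈ A_S}`. -/
def CM2 {n : ℕ} (f : List α → S) (T : Subsemigroup S) (s : Fin n → α) : Set (α ⊕ List α) :=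
  {x | ∃ i j k : Fin n, f [s i, s j, s k] ∈ T ∧ f [s i, s j] ∈ T ∧ f [s j, s k] ∈ T ∧
    x = Sum.inr [s i, s j, s k]}

/-- The alphabet `B = A₁ ∪ C`, `C = C_R ∪ C_{L₁} ∪ C_{L₂} ∪ C_{M₁} ∪ C_{M₂}`,
as a set of letters of `α ⊕ List α`. -/
def BSet {n : ℕ} (f : List α → S) (T : Subsemigroup S) (s : Fin n → α) : Set (α ⊕ List α) :=
  A1' f T ∪ CR f T s ∪ CL1 f T s ∪ CL2 f T s ∪ CM1 f T s ∪ CM2 f T s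

/-- The homomorphism `φ : B⁺ → A⁺`, `φ(a) = a` for `a ∈ A₁` and `φ(c_u) = u`. -/
def phiT {α : Type*} (l : List (α ⊕ List α)) : List α :=
  l.flatMap (Sum.elim (fun a => [a]) id)

open scoped Classical in
/-- The function `ρ : A(T) → B⁺` of Section 5 (extended arbitrarily off `A(T)`):
on `A(T)(1)`, `ρ(W) = W` for `W ∈ F₁` and `ρ(W) = c_W` for `W ∈ F₂ ∪ F₃ ∪ F₄`;
for `W = aW₁ ∈ A(T)(i+1)` with `a ∈ A₁`, `ρ(W) = aρ(W₁)`; and for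
`W = sbW₁ ∈ A(T)(i+1)` with `sb ∈ F₂`, `ρ(W) = c_{sb}ρ(W₁)`. -/
noncomputable def rhoT {n : ℕ} (s : Fin n → α) : List α → List (α ⊕ List α)
  | [] => []
  | [a] => [Sum.inl a]
  | [a, b] =>
      if (∃ i, a = s i) ∨ (∃ i, b = s i) then [Sum.inr [a, b]]
      else [Sum.inl a, Sum.inl b]
  | [a, b, c] =>
      if ∃ i, a = s i then
        if ∃ i, c = s i then [Sum.inr [a, b, c]]
        else Sum.inr [a, b] :: rhoT s [c]
      else Sum.inl a :: rhoT s [b, c]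
  | a :: b :: d :: e :: rest =>
      if ∃ i, a = s i then Sum.inr [a, b] :: rhoT s (d :: e :: rest)
      else Sum.inl a :: rhoT s (b :: d :: e :: rest)

/-- `N = (max_{X ∈ Left(R)} ‖X‖) + 4`. -/
noncomputable def Nbound (R : Set (List α × List α)) : ℕ :=
  sSup {m | ∃ X Y : List α, (X, Y) ∈ R ∧ m = X.length} + 4

/-- Rules of the form (D1): `U' → ρ(Ū)` for `U' ∈ B⁺` with `‖φ(U')‖ ≤ N` and
`φ(U') ∉ Irr(R)`, where `φ(U') →*_R Ū ∈ Irr(R)`. -/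
def D1 {n : ℕ} (R : Set (List α × List α)) (f : List α → S) (T : Subsemigroup S)
    (s : Fin n → α) : Set (List (α ⊕ List α) × List (α ⊕ List α)) :=
  {p | ∃ (U' : List (α ⊕ List α)) (Ubar : List α), U' ≠ [] ∧
    (∀ x ∈ U', x ∈ BSet f T s) ∧ (phiT U').length ≤ Nbound R ∧ ¬ Irr R (phiT U') ∧
    Steps R (phiT U') Ubar ∧ Irr R Ubar ∧ p = (U', rhoT s Ubar)}

/-- Rules of the form (D2): `U' → ρ(φ(U'))` for `U' ∈ B⁺` with `‖U'‖ = 2`,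
`φ(U') ∈ A(T)` and `U' ≠ ρ(φ(U'))`. -/
def D2 {n : ℕ} (f : List α → S) (T : Subsemigroup S) (s : Fin n → α) :
    Set (List (α ⊕ List α) × List (α ⊕ List α)) :=
  {p | ∃ U' : List (α ⊕ List α), (∀ x ∈ U', x ∈ BSet f T s) ∧ U'.length = 2 ∧
    phiT U' ∈ ATset f T s ∧ U' ≠ rhoT s (phiT U') ∧ p = (U', rhoT s (phiT U'))}

/-- The rewriting system `R_T` over `B`. -/
def RT {n : ℕ} (R : Set (List α × List α)) (f : List α → S) (T : Subsemigroup S)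
    (s : Fin n → α) : Set (List (α ⊕ List α) × List (α ⊕ List α)) :=
  D1 R f T s ∪ D2 f T s

end Sec5

open Sec5

section Aux5

variable {α S : Type*} [Semigroup S] {f : List α → S} {T : Subsemigroup S}
  {n : ℕ} {s : Fin n → α}

lemma phiT_nil' : phiT ([] : List (α ⊕ List α)) = [] := rfl

lemma phiT_inl (a : α) (W : List (α ⊕ List α)) :
    phiT (Sum.inl a :: W) = a :: phiT W := by simp [phiT]

lemma phiT_inr (u : List α) (W : List (α ⊕ List α)) :
    phiT (Sum.inr u :: W) = u ++ phiT W := by simp [phiT]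

lemma fs_not_mem (hQ1 : (T : Set S)ᶜ = {x | ∃ i : Fin n, x = f [s i]}) (i : Fin n) :
    f [s i] ∉ T := by
  have : f [s i] ∈ (T : Set S)ᶜ := by rw [hQ1]; exact ⟨i, rfl⟩
  exact this

lemma a_ne_s (hQ1 : (T : Set S)ᶜ = {x | ∃ i : Fin n, x = f [s i]}) {a : α}
    (ha : f [a] ∈ T) : ¬∃ i : Fin n, a = s i := by
  rintro ⟨i, rfl⟩; exact fs_not_mem hQ1 i ha

lemma BSet_elim {x : α ⊕ List α} (h : x ∈ BSet f T s) :
    (∃ a, f [a] ∈ T ∧ x = Sum.inl a) ∨ (∃ u : List α, 2 ≤ u.length ∧ x = Sum.inr u) := by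
  simp only [BSet, Set.mem_union] at h
  rcases h with ((((h | h) | h) | h) | h) | h
  · exact Or.inl h
  · obtain ⟨a, i, _, _, rfl⟩ := h; exact Or.inr ⟨_, by simp, rfl⟩
  · obtain ⟨i, a, _, _, rfl⟩ := h; exact Or.inr ⟨_, by simp, rfl⟩
  · obtain ⟨i, j, _, rfl⟩ := h; exact Or.inr ⟨_, by simp, rfl⟩
  · obtain ⟨i, a, j, _, _, _, _, rfl⟩ := h; exact Or.inr ⟨_, by simp, rfl⟩
  · obtain ⟨i, j, k, _, _, _, rfl⟩ := h; exact Or.inr ⟨_, by simp, rfl⟩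

lemma phiT_ne_nil {W : List (α ⊕ List α)} (hB : ∀ x ∈ W, x ∈ BSet f T s)
    (hW : W ≠ []) : phiT W ≠ [] := by
  match W with
  | [] => exact absurd rfl hW
  | x :: W' =>
    rcases BSet_elim (hB x (List.mem_cons_self)) with ⟨a, _, rfl⟩ | ⟨u, hu, rfl⟩
    · simp [phiT_inl]
    · rw [phiT_inr]
      intro h
      have := congrArg List.length h
      simp only [List.length_append, List.length_nil, List.length_cons] at this
      omega

lemma phi_single {W : List (α ⊕ List α)} (hB : ∀ x ∈ W, x ∈ BSet f T s) {c : α}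
    (h : phiT W = [c]) : f [c] ∈ T := by
  match W with
  | [] => simp [phiT] at h
  | x :: W' =>
    rcases BSet_elim (hB x (List.mem_cons_self)) with ⟨a, ha, rfl⟩ | ⟨u, hu, rfl⟩
    · rw [phiT_inl] at h
      simp only [List.cons.injEq] at h
      obtain ⟨rfl, -⟩ := h
      exact ha
    · rw [phiT_inr] at h
      have := congrArg List.length h
      simp only [List.length_append, List.length_nil, List.length_cons] at this
      omega

lemma rho_cons_inl (a : α) {W : List α} (ha : ¬∃ i, a = s i) (hW : W ≠ [])
    (h1 : ∀ c, W = [c] → ¬∃ i, c = s i) :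
    rhoT s (a :: W) = Sum.inl a :: rhoT s W := by
  match W with
  | [] => exact absurd rfl hW
  | [c] =>
    simp only [rhoT]
    rw [if_neg]
    rintro (h | h)
    · exact ha h
    · exact h1 c rfl h
  | [c, d] =>
    simp only [rhoT]
    rw [if_neg ha]
  | c :: d :: e :: r =>
    simp only [rhoT]
    rw [if_neg ha]

lemma rho_cons_inr (a b : α) {W : List α} (ha : ∃ i, a = s i) (hW : W ≠ [])
    (h1 : ∀ c, W = [c] → ¬∃ i, c = s i) :
    rhoT s (a :: b :: W) = Sum.inr [a, b] :: rhoT s W := by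
  match W with
  | [] => exact absurd rfl hW
  | [c] =>
    simp only [rhoT]
    rw [if_pos ha, if_neg (h1 c rfl)]
  | c :: d :: r =>
    simp only [rhoT]
    rw [if_pos ha]

end Aux5

theorem aux_5_7 {α S : Type*} [Semigroup S] {f : List α → S} {T : Subsemigroup S}
    {n : ℕ} {s : Fin n → α}
    (hQ1 : (T : Set S)ᶜ = {x | ∃ i : Fin n, x = f [s i]}) :
    ∀ (U' : List (α ⊕ List α)) (i0 : ℕ), U' ≠ [] → (∀ x ∈ U', x ∈ BSet f T s) →
    (∀ x ∈ U'.dropLast, x ∈ A1' f T ∪ CL1 f T s ∪ CL2 f T s) →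
    phiT U' ∈ ATn f T s (i0 + 1) →
    phiT U' ∈ ATn f T s U'.length ∧ rhoT s (phiT U') = U' := by
  intro U'
  induction U' with
  | nil => intro i0 h; exact absurd rfl h
  | cons x rest ih =>
    intro i0 _ hB hinit hφ
    have hBx := hB x (List.mem_cons_self)
    rcases rest with _ | ⟨y, rest'⟩
    · -- base case : U' = [x]
      clear ih hinit hφ
      simp only [BSet, Set.mem_union] at hBx
      rcases hBx with ((((h | h) | h) | h) | h) | h
      · obtain ⟨a, ha, rfl⟩ := h
        have e : phiT [Sum.inl a] = [a] := by simp [phiT]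
        rw [e]
        refine ⟨?_, ?_⟩
        · show [a] ∈ F1 f T ∪ F2 f T s ∪ F3 f T s ∪ F4 f T s
          exact Or.inl (Or.inl (Or.inl ⟨a, ha, rfl⟩))
        · simp only [rhoT]
      · obtain ⟨a, i, ha, hasi, rfl⟩ := h
        have e : phiT [Sum.inr [a, s i]] = [a, s i] := by simp [phiT]
        rw [e]
        refine ⟨?_, ?_⟩
        · show [a, s i] ∈ F1 f T ∪ F2 f T s ∪ F3 f T s ∪ F4 f T s
          exact Or.inl (Or.inr ⟨a, i, ha, hasi, rfl⟩)
        · simp only [rhoT]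
          rw [if_pos (Or.inr ⟨i, rfl⟩)]
      · obtain ⟨i, a, ha, h2, rfl⟩ := h
        have e : phiT [Sum.inr [s i, a]] = [s i, a] := by simp [phiT]
        rw [e]
        refine ⟨?_, ?_⟩
        · show [s i, a] ∈ F1 f T ∪ F2 f T s ∪ F3 f T s ∪ F4 f T s
          exact Or.inl (Or.inl (Or.inr ⟨i, a, Or.inl ha, h2, rfl⟩))
        · simp only [rhoT]
          rw [if_pos (Or.inl ⟨i, rfl⟩)]
      · obtain ⟨i, j, h2, rfl⟩ := h
        have e : phiT [Sum.inr [s i, s j]] = [s i, s j] := by simp [phiT]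
        rw [e]
        refine ⟨?_, ?_⟩
        · show [s i, s j] ∈ F1 f T ∪ F2 f T s ∪ F3 f T s ∪ F4 f T s
          exact Or.inl (Or.inl (Or.inr ⟨i, s j, Or.inr ⟨j, rfl⟩, h2, rfl⟩))
        · simp only [rhoT]
          rw [if_pos (Or.inl ⟨i, rfl⟩)]
      · obtain ⟨i, a, j, ha, h3, hsa, haj, rfl⟩ := h
        have e : phiT [Sum.inr [s i, a, s j]] = [s i, a, s j] := by simp [phiT]
        rw [e]
        refine ⟨?_, ?_⟩
        · show [s i, a, s j] ∈ F1 f T ∪ F2 f T s ∪ F3 f T s ∪ F4 f T s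
          exact Or.inr ⟨i, a, j, Or.inl ha, hsa, haj, h3, rfl⟩
        · simp only [rhoT]
          rw [if_pos ⟨i, rfl⟩, if_pos ⟨j, rfl⟩]
      · obtain ⟨i, j, k, h3, hij, hjk, rfl⟩ := h
        have e : phiT [Sum.inr [s i, s j, s k]] = [s i, s j, s k] := by simp [phiT]
        rw [e]
        refine ⟨?_, ?_⟩
        · show [s i, s j, s k] ∈ F1 f T ∪ F2 f T s ∪ F3 f T s ∪ F4 f T s
          exact Or.inr ⟨i, s j, k, Or.inr ⟨j, rfl⟩, hij, hjk, h3, rfl⟩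
        · simp only [rhoT]
          rw [if_pos ⟨i, rfl⟩, if_pos ⟨k, rfl⟩]
    · -- inductive case : U' = x :: y :: rest'
      have hBrest : ∀ z ∈ (y :: rest'), z ∈ BSet f T s :=
        fun z hz => hB z (List.mem_cons_of_mem _ hz)
      have hrestne : (y :: rest') ≠ [] := by simp
      have hφrest_ne : phiT (y :: rest') ≠ [] := phiT_ne_nil hBrest hrestne
      have hinitx : x ∈ A1' f T ∪ CL1 f T s ∪ CL2 f T s := hinit x (by simp)
      have hinitrest : ∀ z ∈ (y :: rest').dropLast,
          z ∈ A1' f T ∪ CL1 f T s ∪ CL2 f T s :=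
        fun z hz => hinit z (List.mem_cons_of_mem _ hz)
      have hsingle : ∀ c : α, phiT (y :: rest') = [c] → ¬∃ i, c = s i :=
        fun c hc => a_ne_s hQ1 (phi_single hBrest hc)
      rcases hinitx with (hA | hC) | hC
      · -- x = Sum.inl a, a ∈ A₁
        obtain ⟨a, ha, rfl⟩ := hA
        rw [phiT_inl] at hφ ⊢
        have hanes := a_ne_s hQ1 ha
        cases i0 with
        | zero =>
          exfalso
          have hφ' : a :: phiT (y :: rest') ∈
              F1 f T ∪ F2 f T s ∪ F3 f T s ∪ F4 f T s := hφ
          rcases hφ' with ((h | h) | h) | h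
          · obtain ⟨a'', _, heq⟩ := h
            injection heq with _ h2
            exact hφrest_ne h2
          · obtain ⟨i, b, _, _, heq⟩ := h
            injection heq with h1 _
            exact hanes ⟨i, h1⟩
          · obtain ⟨a'', j, _, _, heq⟩ := h
            injection heq with h1 h2
            exact fs_not_mem hQ1 j (phi_single hBrest h2)
          · obtain ⟨i, b, j, _, _, _, _, heq⟩ := h
            injection heq with h1 _
            exact hanes ⟨i, h1⟩
        | succ k =>
          have hφ' : a :: phiT (y :: rest') ∈
              (⋃ a' ∈ A1 f T, ({W | ∃ V ∈ ATn f T s (k + 1), W = a' :: V} ∩ AT0 f T s)) ∪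
              (⋃ X ∈ F2 f T s, ({W | ∃ V ∈ ATn f T s (k + 1), W = X ++ V} ∩ AT0 f T s)) := hφ
          rcases hφ' with h | h
          · simp only [Set.mem_iUnion, Set.mem_inter_iff, Set.mem_setOf_eq] at h
            obtain ⟨a'', ha'', ⟨⟨V, hV, heq⟩, hAT0⟩⟩ := h
            injection heq with h1 h2
            subst V
            obtain ⟨ihl, ihr⟩ := ih k hrestne hBrest hinitrest hV
            constructor
            · show a :: phiT (y :: rest') ∈
                (⋃ a' ∈ A1 f T,
                  ({W | ∃ V ∈ ATn f T s (rest'.length + 1), W = a' :: V} ∩ AT0 f T s)) ∪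
                (⋃ X ∈ F2 f T s,
                  ({W | ∃ V ∈ ATn f T s (rest'.length + 1), W = X ++ V} ∩ AT0 f T s))
              exact Or.inl (Set.mem_biUnion ha ⟨⟨phiT (y :: rest'), ihl, rfl⟩, hAT0⟩)
            · rw [rho_cons_inl a hanes hφrest_ne hsingle, ihr]
          · exfalso
            simp only [Set.mem_iUnion, Set.mem_inter_iff, Set.mem_setOf_eq] at h
            obtain ⟨X, hX, ⟨⟨V, hV, heq⟩, hAT0⟩⟩ := h
            obtain ⟨i, b, _, _, rfl⟩ := hX
            simp only [List.cons_append, List.nil_append] at heq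
            injection heq with h1 _
            exact hanes ⟨i, h1⟩
      all_goals {
        -- x ∈ CL1 or CL2 : unify
        have hx2 : ∃ (i : Fin n) (b : α), (f [b] ∈ T ∨ ∃ k, b = s k) ∧
            f [s i, b] ∈ T ∧ x = Sum.inr [s i, b] := by
          first
          | (obtain ⟨i, a, ha, h2, rfl⟩ := hC; exact ⟨i, a, Or.inl ha, h2, rfl⟩)
          | (obtain ⟨i, j, h2, rfl⟩ := hC; exact ⟨i, s j, Or.inr ⟨j, rfl⟩, h2, rfl⟩)
        clear hC
        obtain ⟨i, b, hb, hsib, rfl⟩ := hx2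
        rw [phiT_inr] at hφ ⊢
        simp only [List.cons_append, List.nil_append] at hφ ⊢
        cases i0 with
        | zero =>
          exfalso
          have hφ' : s i :: b :: phiT (y :: rest') ∈
              F1 f T ∪ F2 f T s ∪ F3 f T s ∪ F4 f T s := hφ
          rcases hφ' with ((h | h) | h) | h
          · obtain ⟨a'', _, heq⟩ := h
            injection heq with _ h2
            exact List.cons_ne_nil _ _ h2
          · obtain ⟨i', b', _, _, heq⟩ := h
            injection heq with _ h2
            injection h2 with _ h3
            exact hφrest_ne h3
          · obtain ⟨a'', j, ha'', _, heq⟩ := h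
            injection heq with h1 _
            rw [← h1] at ha''
            exact fs_not_mem hQ1 i ha''
          · obtain ⟨i', b', j, _, _, _, _, heq⟩ := h
            injection heq with _ h2
            injection h2 with _ h3
            exact fs_not_mem hQ1 j (phi_single hBrest h3)
        | succ k =>
          have hφ' : s i :: b :: phiT (y :: rest') ∈
              (⋃ a' ∈ A1 f T, ({W | ∃ V ∈ ATn f T s (k + 1), W = a' :: V} ∩ AT0 f T s)) ∪
              (⋃ X ∈ F2 f T s, ({W | ∃ V ∈ ATn f T s (k + 1), W = X ++ V} ∩ AT0 f T s)) := hφ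
          rcases hφ' with h | h
          · exfalso
            simp only [Set.mem_iUnion, Set.mem_inter_iff, Set.mem_setOf_eq] at h
            obtain ⟨a'', ha'', ⟨⟨V, hV, heq⟩, hAT0⟩⟩ := h
            injection heq with h1 _
            rw [← h1] at ha''
            exact fs_not_mem hQ1 i ha''
          · simp only [Set.mem_iUnion, Set.mem_inter_iff, Set.mem_setOf_eq] at h
            obtain ⟨X, hX, ⟨⟨V, hV, heq⟩, hAT0⟩⟩ := h
            obtain ⟨i', b', _, _, rfl⟩ := hX
            simp only [List.cons_append, List.nil_append] at heq
            injection heq with h1 heq2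
            injection heq2 with h2 h3
            subst V
            obtain ⟨ihl, ihr⟩ := ih k hrestne hBrest hinitrest hV
            constructor
            · show s i :: b :: phiT (y :: rest') ∈
                (⋃ a' ∈ A1 f T,
                  ({W | ∃ V ∈ ATn f T s (rest'.length + 1), W = a' :: V} ∩ AT0 f T s)) ∪
                (⋃ X ∈ F2 f T s,
                  ({W | ∃ V ∈ ATn f T s (rest'.length + 1), W = X ++ V} ∩ AT0 f T s))
              exact Or.inr (Set.mem_biUnion (show [s i, b] ∈ F2 f T s from
                ⟨i, b, hb, hsib, rfl⟩) ⟨⟨phiT (y :: rest'), ihl, rfl⟩, hAT0⟩)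
            · rw [rho_cons_inr (s i) b ⟨i, rfl⟩ hφrest_ne hsingle, ihr]
      }


/-- **Lemma 5.7.** Let `U' = b'₁⋯b'_l ∈ B⁺` with `b'ᵢ ∈ A₁ ∪ C_{L₁} ∪ C_{L₂}` for all
`1 ≤ i ≤ l − 1` and `b'_l ∈ B`. If `φ(U') ∈ A(T)`, then `φ(U') ∈ A(T)(l)` and
`ρ(φ(U')) = U'`. -/
theorem lemma_5_7
    {α S : Type*} [Semigroup S] (R : Set (List α × List α))
    (hαfin : Finite α) (hRfin : R.Finite) (hRWS : IsRWS R) (hcomp : CompleteRWS R)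
    (f : List α → S) (hpres : Presents R f)
    (T : Subsemigroup S) {n : ℕ} (s : Fin n → α)
    -- (Q1): `S \ T = {[s₁]_R, …, [sₙ]_R}` with `s₁, …, sₙ ∈ Irr(R) ∩ A`
    (hQ1irr : ∀ i : Fin n, Irr R [s i])
    (hQ1 : (T : Set S)ᶜ = {x | ∃ i : Fin n, x = f [s i]})
    -- (Q2): right-hand sides of rules are irreducible
    (hQ2 : ∀ X Y : List α, (X, Y) ∈ R → Irr R Y)
    -- (Q3): no left-hand side is reducible by another rule
    (hQ3 : ∀ X Y : List α, (X, Y) ∈ R → ¬ ∃ X' : List α, Step (R \ {(X, Y)}) X X')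
    (U' : List (α ⊕ List α)) (hne : U' ≠ [])
    (hB : ∀ x ∈ U', x ∈ BSet f T s)
    (hinit : ∀ x ∈ U'.dropLast, x ∈ A1' f T ∪ CL1 f T s ∪ CL2 f T s)
    (hφ : phiT U' ∈ ATset f T s) :
    phiT U' ∈ ATn f T s U'.length ∧ rhoT s (phiT U') = U' := by
  have h := hφ
  simp only [ATset, Set.mem_iUnion] at h
  obtain ⟨i0, h⟩ := h
  exact aux_5_7 hQ1 U' i0 hne hB hinit h
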